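/- For every ideal I of the polynomial ring ℂ[X], the ℂ-linear span of the set {E(k,f) : k ∈ ℤ, f ∈ I} inside the endomorphism algebra of ℂ[t,t⁻¹] is closed under the commutator bracket; that is, this span is a Lie subalgebra of the Lie algebra of ℂ-linear endomorphisms of ℂ[t,t⁻¹]. -/

import Mathlib

open Polynomial

/-- The endomorphism of `ℂ[t,t⁻¹]` (modeled as `ℤ →₀ ℂ`) sending `tⁿ` to `f(n)·t^{n+k}`;
it represents the differential operator `t^k·f(D)` with `D = t·d/dt`. -/
noncomputable def E (k : ℤ) (f : Polynomial ℂ) : Module.End ℂ (ℤ →₀ ℂ) :=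
  Finsupp.lsum ℂ fun n : ℤ => f.eval (n : ℂ) • Finsupp.lsingle (n + k)

lemma E_single (k : ℤ) (f : Polynomial ℂ) (n : ℤ) (c : ℂ) :
    E k f (Finsupp.single n c) = f.eval (n : ℂ) • Finsupp.single (n + k) c := by
  simp only [E, Finsupp.lsum_single, LinearMap.smul_apply, Finsupp.lsingle_apply]

lemma E_mul (k l : ℤ) (f g : Polynomial ℂ) :
    E k f * E l g = E (k + l) (g * f.comp (X + C (l : ℂ))) := by
  apply Finsupp.lhom_ext
  intro n c
  rw [Module.End.mul_apply, E_single, map_smul, E_single, E_single]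
  rw [smul_smul, add_assoc, add_comm l k]
  congr 1
  simp only [eval_comp, eval_mul, eval_add, eval_X, eval_C]
  push_cast
  ring

lemma E_sub (k : ℤ) (f g : Polynomial ℂ) : E k (f - g) = E k f - E k g := by
  apply Finsupp.lhom_ext
  intro n c
  simp only [E_single, LinearMap.sub_apply, eval_sub, sub_smul]

theorem span_E_ideal_lie_closed (I : Ideal (Polynomial ℂ)) :
    ∀ A ∈ Submodule.span ℂ {T : Module.End ℂ (ℤ →₀ ℂ) | ∃ k : ℤ, ∃ f ∈ I, T = E k f},
    ∀ B ∈ Submodule.span ℂ {T : Module.End ℂ (ℤ →₀ ℂ) | ∃ k : ℤ, ∃ f ∈ I, T = E k f},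
      ⁅A, B⁆ ∈ Submodule.span ℂ {T : Module.End ℂ (ℤ →₀ ℂ) | ∃ k : ℤ, ∃ f ∈ I, T = E k f} := by
  set s : Set (Module.End ℂ (ℤ →₀ ℂ)) := {T | ∃ k : ℤ, ∃ f ∈ I, T = E k f} with hs
  have key : ∀ A ∈ s, ∀ B ∈ s, ⁅A, B⁆ ∈ Submodule.span ℂ s := by
    rintro _ ⟨k, f, hf, rfl⟩ _ ⟨l, g, hg, rfl⟩
    have h1 : E k f * E l g = E (k + l) (g * f.comp (X + C (l : ℂ))) := E_mul k l f g
    have h2 : E l g * E k f = E (k + l) (f * g.comp (X + C (k : ℂ))) := by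
      rw [E_mul, add_comm l k]
    have : ⁅E k f, E l g⁆ =
        E (k + l) (g * f.comp (X + C (l : ℂ)) - f * g.comp (X + C (k : ℂ))) := by
      rw [E_sub, ← h1, ← h2]; rfl
    rw [this]
    exact Submodule.subset_span ⟨k + l, _,
      sub_mem (I.mul_mem_right _ hg) (I.mul_mem_right _ hf), rfl⟩
  intro A hA B hB
  induction hA using Submodule.span_induction with
  | mem A hAs =>
    induction hB using Submodule.span_induction with
    | mem B hBs => exact key A hAs B hBs
    | zero =>
      have h0 : ⁅A, (0 : Module.End ℂ (ℤ →₀ ℂ))⁆ = 0 := by rw [Ring.lie_def]; simp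
      rw [h0]; exact zero_mem _
    | add x y hx hy ihx ihy =>
      have h : ⁅A, x + y⁆ = ⁅A, x⁆ + ⁅A, y⁆ := by simp only [Ring.lie_def, mul_add, add_mul]; abel
      rw [h]; exact add_mem ihx ihy
    | smul c x hx ih =>
      have h : ⁅A, c • x⁆ = c • ⁅A, x⁆ := by simp only [Ring.lie_def, mul_smul_comm, smul_mul_assoc, smul_sub]
      rw [h]; exact Submodule.smul_mem _ _ ih
  | zero =>
    have h0 : ⁅(0 : Module.End ℂ (ℤ →₀ ℂ)), B⁆ = 0 := by rw [Ring.lie_def]; simp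
    rw [h0]; exact zero_mem _
  | add x y hx hy ihx ihy =>
    have h : ⁅x + y, B⁆ = ⁅x, B⁆ + ⁅y, B⁆ := by simp only [Ring.lie_def, mul_add, add_mul]; abel
    rw [h]; exact add_mem ihx ihy
  | smul c x hx ih =>
    have h : ⁅c • x, B⁆ = c • ⁅x, B⁆ := by simp only [Ring.lie_def, mul_smul_comm, smul_mul_assoc, smul_sub]
    rw [h]; exact Submodule.smul_mem _ _ ih
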